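/- arXiv:2505.07696 — 3 statements merged into one kernel-verified Lean document; each statement's English description precedes it below -/
import Mathlib

section
/- Trilateration in ℝ³ admits at most two solutions: given three affinely independent points p₁, p₂, p₃ ∈ ℝ³ and radii r₁, r₂, r₃ ≥ 0, the set of points x ∈ ℝ³ with ‖x - pᵢ‖ = rᵢ for i = 1,2,3 has at most 2 elements. -/
open EuclideanSpace Submodule Module RealInnerProductSpace

local notation "E" => EuclideanSpace ℝ (Fin 3)

-- helper: membership in orthogonal of a span
lemma mem_orth_span {s : Set E} {d : E} (h : ∀ u ∈ s, ⟪u, d⟫ = 0) :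
    d ∈ (Submodule.span ℝ s)ᗮ := by
  rw [Submodule.mem_orthogonal]
  intro u hu
  induction hu using Submodule.span_induction with
  | mem x hx => exact h x hx
  | zero => simp
  | add x y _ _ hx hy => simp [inner_add_left, hx, hy]
  | smul a x _ hx => simp [inner_smul_left, hx]

lemma equidist_orth {x y a b : E} (hxa : ‖x - a‖ = ‖y - a‖) (hxb : ‖x - b‖ = ‖y - b‖) :
    ⟪b - a, y - x⟫ = 0 := by
  have h1 : ‖x - a‖^2 = ‖y - a‖^2 := by rw [hxa]
  have h2 : ‖x - b‖^2 = ‖y - b‖^2 := by rw [hxb]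
  rw [← real_inner_self_eq_norm_sq, ← real_inner_self_eq_norm_sq] at h1 h2
  simp only [inner_sub_sub_self] at h1 h2
  have := real_inner_comm x a
  have := real_inner_comm y a
  have := real_inner_comm x b
  have := real_inner_comm y b
  simp only [inner_sub_left, inner_sub_right]
  linarith

theorem trilateration_at_most_two_solutions
    (p : Fin 3 → EuclideanSpace ℝ (Fin 3)) (hp : AffineIndependent ℝ p)
    (r : Fin 3 → ℝ) (hr : ∀ i, 0 ≤ r i) :
    ∃ a b : EuclideanSpace ℝ (Fin 3),
      {x : EuclideanSpace ℝ (Fin 3) | ∀ i, ‖x - p i‖ = r i} ⊆ {a, b} := by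
  set S := {x : EuclideanSpace ℝ (Fin 3) | ∀ i, ‖x - p i‖ = r i} with hS
  -- core: any three elements, two distinct from x, are equal
  have core : ∀ x ∈ S, ∀ y ∈ S, ∀ z ∈ S, x ≠ y → x ≠ z → y = z := by
    intro x hx y hy z hz hxy hxz
    -- direction vectors
    set v₁ : E := p 1 - p 0 with hv₁
    set v₂ : E := p 2 - p 0 with hv₂
    -- linear independence of v₁ v₂
    have hli : LinearIndependent ℝ ![v₁, v₂] := by
      rw [affineIndependent_iff_linearIndependent_vsub ℝ p 0] at hp
      have hf : Function.Injective (![⟨1, by decide⟩, ⟨2, by decide⟩] :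
          Fin 2 → {i : Fin 3 // i ≠ 0}) := by
        intro a b hab
        fin_cases a <;> fin_cases b <;> simp_all
      have := hp.comp _ hf
      convert this using 1
      ext j
      fin_cases j <;> rfl
      rfl
    set W : Submodule ℝ E := Submodule.span ℝ {v₁, v₂} with hW
    have hWrank : finrank ℝ W = 2 := by
      have : ({v₁, v₂} : Set E) = Set.range ![v₁, v₂] := by
        simp [Set.range_comp]
        ext u
        simp [Fin.exists_fin_two]
        tauto
      rw [hW, this, finrank_span_eq_card hli]
      simp
    have hWorank : finrank ℝ (Wᗮ) = 1 := by
      have h3 : finrank ℝ E = 3 := by simp [finrank_euclideanSpace_fin]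
      have := W.finrank_add_finrank_orthogonal
      omega
    -- y - x and z - x are in Wᗮ
    have horth : ∀ w ∈ S, w - x ∈ Wᗮ := by
      intro w hw
      apply mem_orth_span
      intro u hu
      rcases hu with hu | hu
      · subst hu
        exact equidist_orth (by rw [hx 0, hw 0]) (by rw [hx 1, hw 1])
      · rw [Set.mem_singleton_iff] at hu; subst hu
        exact equidist_orth (by rw [hx 0, hw 0]) (by rw [hx 2, hw 2])
    have hy' : y - x ∈ Wᗮ := horth y hy
    have hz' : z - x ∈ Wᗮ := horth z hz
    have hyx : y - x ≠ 0 := sub_ne_zero.mpr (Ne.symm hxy)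
    have hzx : z - x ≠ 0 := sub_ne_zero.mpr (Ne.symm hxz)
    -- Wᗮ = span of y - x
    have hspan : Submodule.span ℝ {y - x} = Wᗮ := by
      apply Submodule.eq_of_le_of_finrank_le
      · rw [Submodule.span_le, Set.singleton_subset_iff]; exact hy'
      · rw [hWorank, finrank_span_singleton hyx]
    have : z - x ∈ Submodule.span ℝ {y - x} := hspan ▸ hz'
    rw [Submodule.mem_span_singleton] at this
    obtain ⟨c, hc⟩ := this
    -- quadratic condition from distance to p 0
    set d := y - x with hd
    have key : ∀ t : ℝ, x + t • d ∈ S → 2 * t * ⟪d, x - p 0⟫ + t^2 * ‖d‖^2 = 0 := by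
      intro t ht
      have h1 : ‖x + t • d - p 0‖^2 = ‖x - p 0‖^2 := by rw [ht 0, hx 0]
      rw [← real_inner_self_eq_norm_sq, ← real_inner_self_eq_norm_sq] at h1
      have : x + t • d - p 0 = (x - p 0) + t • d := by abel
      rw [this, inner_add_add_self, real_inner_smul_left, real_inner_smul_right,
        real_inner_smul_left, real_inner_smul_right, real_inner_self_eq_norm_sq] at h1
      have hcomm := real_inner_comm d (x - p 0)
      have hdd : ⟪d, d⟫ = ‖d‖^2 := real_inner_self_eq_norm_sq d
      rw [hcomm, hdd] at h1
      linear_combination h1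
    have k1 : 2 * ⟪d, x - p 0⟫ + ‖d‖^2 = 0 := by
      have hxd : x + (1:ℝ) • d = y := by rw [one_smul, hd]; abel
      have := key 1 (by rw [hxd]; exact hy)
      linarith [this]
    have k2 : 2 * c * ⟪d, x - p 0⟫ + c^2 * ‖d‖^2 = 0 := by
      apply key c
      have : x + c • d = z := by rw [hc]; abel
      rw [this]; exact hz
    have hdn : ‖d‖^2 ≠ 0 := pow_ne_zero _ (norm_ne_zero_iff.mpr hyx)
    have hc1 : c = 1 := by
      have hcc : c * (c - 1) * ‖d‖^2 = 0 := by linear_combination k2 - c * k1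
      have : c = 0 ∨ c = 1 := by
        rcases mul_eq_zero.1 hcc with h | h
        · rcases mul_eq_zero.1 h with h | h
          · left; exact h
          · right; linarith
        · exact absurd h hdn
      rcases this with h | h
      · exfalso; apply hzx; rw [← hc, h, zero_smul]
      · exact h
    have hzy : z - x = y - x := by rw [← hc, hc1, one_smul]
    exact (sub_left_inj.mp hzy).symm
  by_cases hne : S.Nonempty
  · obtain ⟨a, ha⟩ := hne
    by_cases h2 : ∃ b ∈ S, b ≠ a
    · obtain ⟨b, hb, hba⟩ := h2
      refine ⟨a, b, fun x hxS => ?_⟩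
      by_contra hcon
      simp only [Set.mem_insert_iff, Set.mem_singleton_iff] at hcon
      push_neg at hcon
      rcases hcon with ⟨hxa, hxb⟩
      exact hba (core x hxS b hb a ha (fun h => hxb h) (fun h => hxa h))
    · push_neg at h2
      exact ⟨a, a, fun x hxS => by simp [h2 x hxS]⟩
  · exact ⟨0, 0, fun x hxS => absurd ⟨x, hxS⟩ hne⟩
end

section
/- The Cayley–Menger determinant of three points p₀, p₁, p₂ ∈ ℝᵈ vanishes if and only if the points are collinear (affinely dependent). Here CM(p₀,p₁,p₂) is the 4×4 determinant with first row (0,1,1,1), and rows (1, 0, d₀₁², d₀₂²), (1, d₁₀², 0, d₁₂²), (1, d₂₀², d₂₁², 0), where dᵢⱼ = ‖pᵢ - pⱼ‖. -/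
open RealInnerProductSpace

lemma cm_det_aux (a b c D : ℝ) (h : c = a + b - 2*D) :
    Matrix.det !![0,1,1,1;(1:ℝ),0,a,b;1,a,0,c;1,b,c,0] = -4*(a*b - D^2) := by
  simp [Matrix.det_succ_row_zero, Fin.sum_univ_succ, Fin.succAbove, Fin.castSucc, Fin.castAdd,
    Fin.castLE]
  subst h; ring

theorem cayleyMenger_three_points_eq_zero_iff_collinear {d : ℕ}
    (p₀ p₁ p₂ : EuclideanSpace ℝ (Fin d)) :
    Matrix.det
      !![0, 1, 1, 1;
         1, 0, dist p₀ p₁ ^ 2, dist p₀ p₂ ^ 2;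
         1, dist p₁ p₀ ^ 2, 0, dist p₁ p₂ ^ 2;
         1, dist p₂ p₀ ^ 2, dist p₂ p₁ ^ 2, 0] = 0 ↔
    Collinear ℝ ({p₀, p₁, p₂} : Set (EuclideanSpace ℝ (Fin d))) := by
  set x := p₁ - p₀ with hx
  set y := p₂ - p₀ with hy
  have h01 : dist p₀ p₁ = ‖x‖ := by rw [dist_eq_norm']
  have h02 : dist p₀ p₂ = ‖y‖ := by rw [dist_eq_norm']
  have h10 : dist p₁ p₀ = ‖x‖ := by rw [dist_eq_norm]
  have h20 : dist p₂ p₀ = ‖y‖ := by rw [dist_eq_norm]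
  have h12 : dist p₁ p₂ = ‖x - y‖ := by
    rw [dist_eq_norm]; congr 1; simp [hx, hy]
  have h21 : dist p₂ p₁ = ‖x - y‖ := by rw [dist_comm]; exact h12
  have hsub : ‖x - y‖ ^ 2 = ‖x‖ ^ 2 - 2 * ⟪x, y⟫ + ‖y‖ ^ 2 := by
    rw [norm_sub_sq_real]
  have hdet : Matrix.det
      !![0, 1, 1, 1;
         1, 0, dist p₀ p₁ ^ 2, dist p₀ p₂ ^ 2;
         1, dist p₁ p₀ ^ 2, 0, dist p₁ p₂ ^ 2;
         1, dist p₂ p₀ ^ 2, dist p₂ p₁ ^ 2, 0]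
      = -4 * (‖x‖ ^ 2 * ‖y‖ ^ 2 - ⟪x, y⟫ ^ 2) := by
    rw [h01, h02, h10, h20, h12, h21]
    exact cm_det_aux (‖x‖ ^ 2) (‖y‖ ^ 2) (‖x - y‖ ^ 2) ⟪x, y⟫ (by linarith [hsub])
  rw [hdet]
  have key : (x = 0 ∨ ∃ r : ℝ, y = r • x) ↔
      Collinear ℝ ({p₀, p₁, p₂} : Set (EuclideanSpace ℝ (Fin d))) := by
    constructor
    · rintro (h0 | ⟨r, hr⟩)
      · have : p₁ = p₀ := by rwa [hx, sub_eq_zero] at h0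
        rw [this, Set.insert_comm, Set.insert_eq_self.2 (by simp)]
        exact collinear_pair ℝ _ _
      · rw [collinear_iff_of_mem (Set.mem_insert p₀ _)]
        refine ⟨x, fun p hp => ?_⟩
        rcases hp with rfl | rfl | rfl
        · exact ⟨0, by simp⟩
        · exact ⟨1, by simp [hx]⟩
        · exact ⟨r, by rw [← hr, hy]; simp⟩
    · intro hc
      rw [collinear_iff_of_mem (Set.mem_insert p₀ _)] at hc
      obtain ⟨v, hv⟩ := hc
      obtain ⟨r₁, hr₁⟩ := hv p₁ (by simp)
      obtain ⟨r₂, hr₂⟩ := hv p₂ (by simp)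
      have hx' : x = r₁ • v := by rw [hx, hr₁]; simp
      have hy' : y = r₂ • v := by rw [hy, hr₂]; simp
      by_cases h0 : x = 0
      · exact Or.inl h0
      · refine Or.inr ⟨r₂ / r₁, ?_⟩
        have hr₁0 : r₁ ≠ 0 := fun h => h0 (by simp [hx', h])
        rw [hx', hy', smul_smul, div_mul_cancel₀ _ hr₁0]
  rw [← key]
  constructor
  · intro h
    have h2 : ⟪x, y⟫ ^ 2 = (‖x‖ * ‖y‖) ^ 2 := by nlinarith
    have habs : |⟪x, y⟫| = ‖x‖ * ‖y‖ := by
      rw [← abs_of_nonneg (mul_nonneg (norm_nonneg x) (norm_nonneg y)),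
        ← sq_eq_sq_iff_abs_eq_abs]
      exact h2
    have := ((norm_inner_eq_norm_tfae (𝕜 := ℝ) x y).out 0 2).1 (by rwa [Real.norm_eq_abs])
    exact this
  · intro h
    have habs : ‖⟪x, y⟫‖ = ‖x‖ * ‖y‖ := ((norm_inner_eq_norm_tfae (𝕜 := ℝ) x y).out 2 0).1 h
    rw [Real.norm_eq_abs] at habs
    have h2 : ⟪x, y⟫ ^ 2 = ‖x‖ ^ 2 * ‖y‖ ^ 2 := by rw [← sq_abs, habs]; ring
    linarith
end

section
/- For five points p₀, …, p₄ in ℝ³, the 6×6 Cayley–Menger determinant vanishes: CM(p₀,…,p₄) = 0. -/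
theorem cayleyMenger_five_points_in_R3_eq_zero
    (p : Fin 5 → EuclideanSpace ℝ (Fin 3)) :
    Matrix.det (Matrix.of (fun i j : Option (Fin 5) =>
      match i, j with
      | none, none => (0 : ℝ)
      | none, some _ => 1
      | some _, none => 1
      | some i, some j => dist (p i) (p j) ^ 2)) = 0 := by
  set A : Matrix (Option (Fin 5)) (Fin 5) ℝ := Matrix.of (fun i t =>
    match i with
    | none => ![1, 0, 0, 0, 0] t
    | some i => ![(p i 0)^2 + (p i 1)^2 + (p i 2)^2, 1,
        -2 * p i 0, -2 * p i 1, -2 * p i 2] t) with hA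
  set B : Matrix (Fin 5) (Option (Fin 5)) ℝ := Matrix.of (fun t j =>
    match j with
    | none => ![0, 1, 0, 0, 0] t
    | some j => ![1, (p j 0)^2 + (p j 1)^2 + (p j 2)^2,
        p j 0, p j 1, p j 2] t) with hB
  have hdist : ∀ i j : Fin 5, dist (p i) (p j) ^ 2 =
      (p i 0 - p j 0)^2 + (p i 1 - p j 1)^2 + (p i 2 - p j 2)^2 := by
    intro i j
    rw [EuclideanSpace.dist_eq, Real.sq_sqrt (by positivity)]
    simp [Fin.sum_univ_three, Real.dist_eq, sq_abs]
  have hfact : (Matrix.of (fun i j : Option (Fin 5) =>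
      match i, j with
      | none, none => (0 : ℝ)
      | none, some _ => 1
      | some _, none => 1
      | some i, some j => dist (p i) (p j) ^ 2)) = A * B := by
    ext i j
    rw [Matrix.mul_apply]
    match i, j with
    | none, none => simp [hA, hB, Fin.sum_univ_five]
    | none, some j => simp [hA, hB, Fin.sum_univ_five]
    | some i, none => simp [hA, hB, Fin.sum_univ_five]
    | some i, some j =>
        simp only [hA, hB, Matrix.of_apply, Fin.sum_univ_five]
        show dist (p i) (p j) ^ 2 = _
        rw [hdist i j]
        simp [Matrix.cons_val_zero, Matrix.cons_val_one]
        ring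
  rw [hfact]
  -- B has a nontrivial kernel since 6 > 5
  have hker : LinearMap.ker B.mulVecLin ≠ ⊥ := by
    intro h
    have hinj := LinearMap.ker_eq_bot.mp h
    have := LinearMap.finrank_le_finrank_of_injective hinj
    simp [Module.finrank_fintype_fun_eq_card] at this
  obtain ⟨v, hv, hv0⟩ := Submodule.ne_bot_iff _ |>.mp hker
  rw [← Matrix.exists_mulVec_eq_zero_iff]
  refine ⟨v, hv0, ?_⟩
  have hBv : B.mulVec v = 0 := by
    have := LinearMap.mem_ker.mp hv
    rwa [Matrix.mulVecLin_apply] at this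
  rw [← Matrix.mulVec_mulVec, hBv, Matrix.mulVec_zero]
end
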